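/- Fix N ≥ 1, privacy sensitivities α_1,…,α_N ∈ (0,1), and constants κ, L_F, c, S > 0. Define the social cost SC(σ) = Σ_{i=1}^N [(1−α_i)·κ·Δ(σ)·(1 + Δ(σ)/(2 L_F)) + α_i·c·S/σ_i] on (0,∞)^N, where Δ(σ) = (Σ_{j=1}^N σ_j^{-2})^{-1/2}. If SC attains a local minimum at σ** ∈ (0,∞)^N, then for every i, κ·(Σ_{j=1}^N (1−α_j))·(Σ_{j=1}^N (σ_j**)^{-2})^{-3/2}·((Σ_{j=1}^N (σ_j**)^{-2})^{-1/2} + L_F)/L_F = α_i·c·S·σ_i**. -/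

import Mathlib

open Finset

/-- If the social cost `SC(σ) = ∑ i [(1−α_i)·κ·Δ(σ)·(1 + Δ(σ)/(2L_F)) + α_i·c·S/σ_i]`, with
`Δ(σ) = (∑ j σ_j^{-2})^{-1/2}`, attains a local minimum on `(0,∞)^N` at `σs`, then for every
`i`, `κ·(∑ j (1−α_j))·(∑ j σs_j^{-2})^{-3/2}·((∑ j σs_j^{-2})^{-1/2} + L_F)/L_F
= α_i·c·S·σs_i`. -/
theorem stmt_5 (N : ℕ) (hN : 1 ≤ N) (α : Fin N → ℝ) (hα : ∀ i, 0 < α i ∧ α i < 1)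
    (κ L_F c S : ℝ) (hκ : 0 < κ) (hL : 0 < L_F) (hc : 0 < c) (hS : 0 < S)
    (SC : (Fin N → ℝ) → ℝ)
    (hSC : ∀ σ, SC σ = ∑ i, ((1 - α i) * κ * ((∑ j, ((σ j) ^ 2)⁻¹) ^ (-(1 / 2) : ℝ)) *
        (1 + ((∑ j, ((σ j) ^ 2)⁻¹) ^ (-(1 / 2) : ℝ)) / (2 * L_F)) + α i * c * S / σ i))
    (σs : Fin N → ℝ) (hpos : ∀ i, 0 < σs i)
    (hmin : IsLocalMinOn SC {σ : Fin N → ℝ | ∀ i, 0 < σ i} σs) :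
    ∀ i, κ * (∑ j, (1 - α j)) * ((∑ j, ((σs j) ^ 2)⁻¹) ^ (-(3 / 2) : ℝ)) *
      (((∑ j, ((σs j) ^ 2)⁻¹) ^ (-(1 / 2) : ℝ)) + L_F) / L_F = α i * c * S * σs i := by
  -- the positivity set is an open neighborhood of σs
  have hopen : IsOpen {σ : Fin N → ℝ | ∀ i, 0 < σ i} := by
    have : {σ : Fin N → ℝ | ∀ i, 0 < σ i} = Set.pi Set.univ (fun _ => Set.Ioi (0:ℝ)) := by
      ext σ; simp [Set.mem_pi]
    rw [this]
    exact isOpen_set_pi Set.finite_univ (fun i _ => isOpen_Ioi)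
  have hnhds : {σ : Fin N → ℝ | ∀ i, 0 < σ i} ∈ nhds σs :=
    hopen.mem_nhds (by exact hpos)
  have hlm : IsLocalMin SC σs := hmin.isLocalMin hnhds
  intro i
  set s : ℝ := σs i with hs_def
  have hs : 0 < s := hpos i
  -- restrict to the i-th coordinate line
  set u : ℝ → (Fin N → ℝ) := fun t => Function.update σs i t with hu_def
  have hu_cont : Continuous u := continuous_const.update i continuous_id
  have hus : u s = σs := Function.update_eq_self i σs
  have hgmin : IsLocalMin (SC ∘ u) s := by
    refine IsLocalMin.comp_continuous ?_ hu_cont.continuousAt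
    rw [hus]; exact hlm
  -- rewrite SC ∘ u in one-variable form
  set C : ℝ := ∑ j ∈ univ \ {i}, ((σs j) ^ 2)⁻¹ with hC_def
  set D : ℝ := ∑ j ∈ univ \ {i}, α j * c * S / σs j with hD_def
  set K : ℝ := ∑ j, (1 - α j) with hK_def
  set q : ℝ → ℝ := fun t => (t ^ 2)⁻¹ + C with hq_def
  have hqsum : ∀ t, (∑ j, ((u t j) ^ 2)⁻¹) = q t := by
    intro t
    have : (fun j => ((u t j) ^ 2)⁻¹) =
        Function.update (fun j => ((σs j) ^ 2)⁻¹) i ((t ^ 2)⁻¹) := by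
      ext j
      rcases eq_or_ne j i with rfl | h
      · simp [hu_def]
      · simp [hu_def, Function.update_of_ne h]
    rw [this, Finset.sum_update_of_mem (mem_univ i)]
  have hdsum : ∀ t, (∑ j, α j * c * S / u t j) = α i * c * S / t + D := by
    intro t
    have : (fun j => α j * c * S / u t j) =
        Function.update (fun j => α j * c * S / σs j) i (α i * c * S / t) := by
      ext j
      rcases eq_or_ne j i with rfl | h
      · simp [hu_def]
      · simp [hu_def, Function.update_of_ne h]
    rw [this, Finset.sum_update_of_mem (mem_univ i)]
  have hg : ∀ t, (SC ∘ u) t =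
      K * (κ * ((q t) ^ (-(1/2) : ℝ)) * (1 + ((q t) ^ (-(1/2) : ℝ)) / (2 * L_F)))
        + (α i * c * S) * t⁻¹ + D := by
    intro t
    simp only [Function.comp_apply, hSC (u t), hqsum t]
    rw [Finset.sum_add_distrib, hdsum t]
    have : (∑ j, (1 - α j) * κ * ((q t) ^ (-(1/2) : ℝ)) *
        (1 + ((q t) ^ (-(1/2) : ℝ)) / (2 * L_F))) =
        K * (κ * ((q t) ^ (-(1/2) : ℝ)) * (1 + ((q t) ^ (-(1/2) : ℝ)) / (2 * L_F))) := by
      rw [hK_def, Finset.sum_mul]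
      exact Finset.sum_congr rfl (fun j _ => by ring)
    rw [this, div_eq_mul_inv]
    ring
  -- the sum at σs equals q s
  have hQ : (∑ j, ((σs j) ^ 2)⁻¹) = q s := by rw [← hus]; exact hqsum s
  have hqs : 0 < q s := by
    rw [← hQ]
    exact Finset.sum_pos (fun j _ => inv_pos.mpr (pow_pos (hpos j) 2)) ⟨i, mem_univ i⟩
  -- derivative computation
  have hq' : HasDerivAt q (-(2 * s) / (s ^ 2) ^ 2) s := by
    have h1 : HasDerivAt (fun t : ℝ => t ^ 2) (2 * s) s := by
      simpa using hasDerivAt_pow 2 s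
    exact (h1.inv (by positivity)).add_const C
  set a : ℝ := (q s) ^ (-(1/2) : ℝ) with ha_def
  have ha : 0 < a := Real.rpow_pos_of_pos hqs _
  have hP : HasDerivAt (fun t => (q t) ^ (-(1/2) : ℝ))
      (-(2 * s) / (s ^ 2) ^ 2 * (-(1/2)) * (q s) ^ ((-(1/2) : ℝ) - 1)) s :=
    hq'.rpow_const (Or.inl (ne_of_gt hqs))
  set P' : ℝ := -(2 * s) / (s ^ 2) ^ 2 * (-(1/2)) * (q s) ^ ((-(1/2) : ℝ) - 1) with hP'_def
  have hder : HasDerivAt (SC ∘ u)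
      (K * (κ * P' * (1 + (q s) ^ (-(1/2) : ℝ) / (2 * L_F)) +
          κ * (q s) ^ (-(1/2) : ℝ) * (P' / (2 * L_F)))
        + (α i * c * S) * (-(s ^ 2)⁻¹)) s := by
    have hfun : (SC ∘ u) = fun t =>
        K * (κ * ((q t) ^ (-(1/2) : ℝ)) * (1 + ((q t) ^ (-(1/2) : ℝ)) / (2 * L_F)))
          + (α i * c * S) * t⁻¹ + D := funext hg
    rw [hfun]
    exact ((((hP.const_mul κ).mul ((hP.div_const (2 * L_F)).const_add 1)).const_mul K).add
      ((hasDerivAt_inv (ne_of_gt hs)).const_mul (α i * c * S))).add_const D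
  have hzero : K * (κ * P' * (1 + (q s) ^ (-(1/2) : ℝ) / (2 * L_F)) +
        κ * (q s) ^ (-(1/2) : ℝ) * (P' / (2 * L_F)))
      + (α i * c * S) * (-(s ^ 2)⁻¹) = 0 := by
    rw [← hder.deriv]; exact hgmin.deriv_eq_zero
  -- exponent identities
  have ha3 : (q s) ^ (-(3/2) : ℝ) = a ^ 3 := by
    rw [ha_def, ← Real.rpow_natCast ((q s) ^ (-(1/2) : ℝ)) 3, ← Real.rpow_mul hqs.le]
    norm_num
  have hexp : (q s) ^ ((-(1/2) : ℝ) - 1) = a ^ 3 := by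
    rw [← ha3]; norm_num
  have hqa : q s = (a ^ 2)⁻¹ := by
    rw [ha_def, ← Real.rpow_natCast ((q s) ^ (-(1/2) : ℝ)) 2, ← Real.rpow_mul hqs.le]
    norm_num [Real.rpow_neg_one]
  -- final algebra
  rw [hQ, ha3, ← ha_def]
  rw [hP'_def, hexp, ← ha_def] at hzero
  have hP'val : -(2 * s) / (s ^ 2) ^ 2 * (-(1/2)) * a ^ 3 = s⁻¹ ^ 3 * a ^ 3 := by
    field_simp
  rw [hP'val] at hzero
  have hsne : s ≠ 0 := ne_of_gt hs
  have hLne : L_F ≠ 0 := ne_of_gt hL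
  field_simp at hzero ⊢
  have h2 : (2 * s ^ 2) * (κ * K * a ^ 3 * (a + L_F)) = (2 * s ^ 2) * (α i * c * S * s * L_F) := by
    linear_combination s ^ 2 * hzero
  linear_combination hzero / 2
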